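/- The optimal pebbling number of the k-dimensional hypercube Q_k satisfies π_OPT(Q_k) ≥ (4/3)^k. -/

import Mathlib

open SimpleGraph

variable {V : Type*}

/-- Apply a pebbling move along the ordered pair `e`. -/
def applyMove [DecidableEq V] (D : V → ℕ) (e : V × V) : V → ℕ :=
  fun w => if w = e.1 then D w - 2 else if w = e.2 then D w + 1 else D w

/-- A list of ordered pairs is a valid pebbling sequence from `D`. -/
def ValidSeq [DecidableEq V] (G : SimpleGraph V) : (V → ℕ) → List (V × V) → Prop
  | _, [] => True
  | D, e :: l => G.Adj e.1 e.2 ∧ 2 ≤ D e.1 ∧ ValidSeq G (applyMove D e) l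

def applySeq [DecidableEq V] (D : V → ℕ) : List (V × V) → (V → ℕ)
  | [] => D
  | e :: l => applySeq (applyMove D e) l

/-- `r` is `m`-reachable under `D`. -/
def Reaches [DecidableEq V] (G : SimpleGraph V) (D : V → ℕ) (r : V) (m : ℕ) : Prop :=
  ∃ l : List (V × V), ValidSeq G D l ∧ m ≤ applySeq D l r

def Solvable [DecidableEq V] (G : SimpleGraph V) (D : V → ℕ) : Prop :=
  ∀ r : V, Reaches G D r 1

noncomputable def pebNumTo [Fintype V] [DecidableEq V] (G : SimpleGraph V) (r : V) : ℕ :=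
  sInf {k : ℕ | ∀ D : V → ℕ, (∑ v, D v) = k → Reaches G D r 1}

noncomputable def pebNum [Fintype V] [DecidableEq V] (G : SimpleGraph V) : ℕ :=
  sInf {k : ℕ | ∀ D : V → ℕ, (∑ v, D v) = k → Solvable G D}

noncomputable def optPebNum [Fintype V] [DecidableEq V] (G : SimpleGraph V) : ℕ :=
  sInf {k : ℕ | ∃ D : V → ℕ, (∑ v, D v) = k ∧ Solvable G D}

/-- The `k`-dimensional hypercube: binary strings of length `k`, adjacent when they
differ in exactly one coordinate. -/
def hypercube (k : ℕ) : SimpleGraph (Fin k → Bool) where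
  Adj u v := hammingDist u v = 1
  symm := ⟨fun u v h => by simpa [hammingDist_comm] using h⟩
  loopless := ⟨fun u h => by simp [hammingDist_self] at h⟩


namespace PebbleAux

open Finset

noncomputable def wt {k : ℕ} (r v : Fin k → Bool) : ℚ := (1/2) ^ hammingDist v r

lemma wt_nonneg {k : ℕ} (r v : Fin k → Bool) : 0 ≤ wt r v := by unfold wt; positivity

lemma wt_adj {k : ℕ} {u w r : Fin k → Bool} (h : hammingDist u w = 1) :
    wt r w ≤ 2 * wt r u := by
  have ht : hammingDist u r ≤ 1 + hammingDist w r := by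
    calc hammingDist u r ≤ hammingDist u w + hammingDist w r := hammingDist_triangle _ _ _
      _ = 1 + hammingDist w r := by rw [h]
  unfold wt
  cases hn : hammingDist u r with
  | zero =>
      have : ((1:ℚ)/2) ^ hammingDist w r ≤ 1 := by
        apply pow_le_one₀ <;> norm_num
      simpa using this.trans (by norm_num)
  | succ m =>
      have hm : m ≤ hammingDist w r := by omega
      have h1 : ((1:ℚ)/2) ^ hammingDist w r ≤ (1/2) ^ m :=
        pow_le_pow_of_le_one (by norm_num) (by norm_num) hm
      have h2 : ((1:ℚ)/2) ^ m = 2 * (1/2) ^ (m+1) := by ring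
      linarith

noncomputable def weight {k : ℕ} (D : (Fin k → Bool) → ℕ) (r : Fin k → Bool) : ℚ :=
  ∑ v, (D v : ℚ) * wt r v

lemma weight_applyMove {k : ℕ} (D : (Fin k → Bool) → ℕ) (e : _ × _) (r : Fin k → Bool)
    (hadj : (hypercube k).Adj e.1 e.2) (h2 : 2 ≤ D e.1) :
    weight (applyMove D e) r ≤ weight D r := by
  have hne : e.1 ≠ e.2 := hadj.ne
  unfold weight
  set s : Finset (Fin k → Bool) := {e.1, e.2} with hs
  have split : ∀ f : (Fin k → Bool) → ℚ,
      ∑ v, f v = ∑ v ∈ univ \ s, f v + ∑ v ∈ s, f v := by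
    intro f; rw [Finset.sum_sdiff (subset_univ s)]
  rw [split, split (fun v => (D v : ℚ) * wt r v)]
  have hrest : ∑ v ∈ univ \ s, (applyMove D e v : ℚ) * wt r v
      = ∑ v ∈ univ \ s, (D v : ℚ) * wt r v := by
    apply Finset.sum_congr rfl
    intro v hv
    simp only [mem_sdiff, hs, mem_insert, mem_singleton] at hv
    push_neg at hv
    simp [applyMove, hv.2.1, hv.2.2]
  rw [hrest]
  gcongr ?_ + ?_
  · exact le_refl _
  rw [Finset.sum_pair hne, Finset.sum_pair hne]
  have hA : applyMove D e e.1 = D e.1 - 2 := by simp [applyMove]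
  have hB : applyMove D e e.2 = D e.2 + 1 := by simp [applyMove, hne.symm]
  rw [hA, hB]
  have hcast : ((D e.1 - 2 : ℕ) : ℚ) = (D e.1 : ℚ) - 2 := by
    push_cast [Nat.cast_sub h2]; ring
  rw [hcast]
  push_cast
  have := wt_adj (u := e.1) (w := e.2) (r := r) hadj
  have h1 := wt_nonneg r e.1
  nlinarith

lemma weight_applySeq {k : ℕ} (r : Fin k → Bool) :
    ∀ (l : List _) (D), ValidSeq (hypercube k) D l →
      weight (applySeq D l) r ≤ weight D r
  | [], D, _ => le_refl _
  | e :: l, D, ⟨hadj, h2, hl⟩ =>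
      le_trans (weight_applySeq r l _ hl) (weight_applyMove D e r hadj h2)

lemma one_le_weight {k : ℕ} {D : (Fin k → Bool) → ℕ} {r : Fin k → Bool}
    (h : Reaches (hypercube k) D r 1) : 1 ≤ weight D r := by
  obtain ⟨l, hv, hr⟩ := h
  have h0 : (1:ℚ) ≤ (applySeq D l r : ℚ) * wt r r := by
    have : wt r r = 1 := by simp [wt, hammingDist_self]
    rw [this, mul_one]; exact_mod_cast hr
  calc (1:ℚ) ≤ (applySeq D l r : ℚ) * wt r r := h0
    _ ≤ weight (applySeq D l) r :=
        Finset.single_le_sum (fun v _ => mul_nonneg (by positivity) (wt_nonneg r v))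
          (mem_univ r)
    _ ≤ weight D r := weight_applySeq r l D hv

lemma sum_wt {k : ℕ} (v : Fin k → Bool) : ∑ r, wt r v = (3/2 : ℚ) ^ k := by
  have hterm : ∀ r : Fin k → Bool,
      wt r v = ∏ i, (if v i = r i then (1:ℚ) else (1/2)) := by
    intro r
    unfold wt
    rw [hammingDist, Finset.prod_ite, Finset.prod_const_one, one_mul,
      Finset.prod_const]
  simp_rw [hterm]
  rw [← Fintype.prod_sum (fun i (b : Bool) => if v i = b then (1:ℚ) else 1/2)]
  have hone : ∀ i, (∑ b : Bool, if v i = b then (1:ℚ) else 1/2) = 3/2 := by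
    intro i; cases h : v i <;> simp [Fintype.sum_bool] <;> norm_num
  simp_rw [hone]
  rw [Finset.prod_const]
  simp

end PebbleAux

theorem opt_pebbling_hypercube_lower (k : ℕ) :
    ((4 : ℚ) / 3) ^ k ≤ (optPebNum (hypercube k) : ℚ) := by
  classical
  have hne : {n : ℕ | ∃ D : (Fin k → Bool) → ℕ, (∑ v, D v) = n ∧
      Solvable (hypercube k) D}.Nonempty :=
    ⟨∑ _v : Fin k → Bool, 1, fun _ => 1, rfl, fun r => ⟨[], trivial, le_refl 1⟩⟩
  obtain ⟨D, hsum, hsolv⟩ := Nat.sInf_mem hne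
  have h1 : ∀ r : Fin k → Bool, (1:ℚ) ≤ PebbleAux.weight D r :=
    fun r => PebbleAux.one_le_weight (hsolv r)
  have h2 : (2:ℚ) ^ k ≤ ∑ r : Fin k → Bool, PebbleAux.weight D r := by
    calc (2:ℚ)^k = ∑ _r : Fin k → Bool, (1:ℚ) := by
          simp [Finset.card_univ]
      _ ≤ _ := Finset.sum_le_sum (fun r _ => h1 r)
  have h3 : ∑ r : Fin k → Bool, PebbleAux.weight D r
      = (optPebNum (hypercube k) : ℚ) * (3/2)^k := by
    unfold PebbleAux.weight
    rw [Finset.sum_comm]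
    simp_rw [← Finset.mul_sum, PebbleAux.sum_wt]
    rw [← Finset.sum_mul]
    congr 1
    rw [optPebNum, ← hsum]
    push_cast
    rfl
  rw [h3] at h2
  have hpos : (0:ℚ) < (3/2)^k := by positivity
  have key : ((4:ℚ)/3)^k * (3/2)^k = 2^k := by
    rw [← mul_pow]; norm_num
  refine le_of_mul_le_mul_right ?_ hpos
  rw [key]; exact h2
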